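/- (Sequential composition of ⋆-liftings.) Let μ₁ ∈ SubDist(A₁), μ₂ ∈ SubDist(A₂), η₁ : A₁ → SubDist(B₁), η₂ : A₂ → SubDist(B₂), R ⊆ A₁ × A₂, S ⊆ B₁ × B₂. Suppose for all X ⊆ A₁, μ₁[X] ≤ e^ε μ₂[R(X)] + δ, and for all (a₁,a₂) ∈ R and all Y ⊆ B₁, η₁(a₁)[Y] ≤ e^{ε'} η₂(a₂)[S(Y)] + δ'. Then for all Y ⊆ B₁, (bind μ₁ η₁)[Y] ≤ e^{ε+ε'} (bind μ₂ η₂)[S(Y)] + δ + δ'. -/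

import Mathlib

open scoped ENNReal

noncomputable section

def mass {A : Type*} (μ : A → ℝ≥0∞) (X : Set A) : ℝ≥0∞ := ∑' x : X, μ x

def SubDist {A : Type*} (μ : A → ℝ≥0∞) : Prop := mass μ Set.univ ≤ 1

def dpDiv {B : Type*} (ε : ℝ) (μ ν : B → ℝ≥0∞) : ℝ≥0∞ :=
  ⨆ E : Set B, (mass μ E - ENNReal.ofReal (Real.exp ε) * mass ν E)

def relImage {A B : Type*} (R : A → B → Prop) (X : Set A) : Set B :=
  {b | ∃ a ∈ X, R a b}

def extL {A B : Type*} (η : A × Option B → ℝ≥0∞) : Option A × Option B → ℝ≥0∞ :=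
  fun p => p.1.elim 0 (fun a => η (a, p.2))

def extR {A B : Type*} (η : Option A × B → ℝ≥0∞) : Option A × Option B → ℝ≥0∞ :=
  fun p => p.2.elim 0 (fun b => η (p.1, b))

/-- The conditions for a pair `(ηL, ηR)` to witness an `(ε,δ)`-approximate ⋆-lifting
of `μ₁` and `μ₂` for the relation `R`.  Here `⋆` is represented by `none`. -/
def IsStarWitness {A B : Type*} (ε δ : ℝ) (μ₁ : A → ℝ≥0∞) (μ₂ : B → ℝ≥0∞)
    (R : A → B → Prop) (ηL : A × Option B → ℝ≥0∞) (ηR : Option A × B → ℝ≥0∞) : Prop :=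
  SubDist ηL ∧ SubDist ηR ∧
  (∀ a, (∑' b : Option B, ηL (a, b)) = μ₁ a) ∧
  (∀ b, (∑' a : Option A, ηR (a, b)) = μ₂ b) ∧
  (∀ a b, ηL (a, some b) ≠ 0 → R a b) ∧
  (∀ a b, ηR (some a, b) ≠ 0 → R a b) ∧
  dpDiv ε (extL ηL) (extR ηR) ≤ ENNReal.ofReal δ

/-- Existence of an `(ε,δ)`-approximate ⋆-lifting. -/
def StarLift {A B : Type*} (ε δ : ℝ) (μ₁ : A → ℝ≥0∞) (μ₂ : B → ℝ≥0∞)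
    (R : A → B → Prop) : Prop :=
  ∃ ηL ηR, IsStarWitness ε δ μ₁ μ₂ R ηL ηR

/-- Monadic bind of a sub-distribution with a kernel. -/
def dbind {A B : Type*} (μ : A → ℝ≥0∞) (η : A → B → ℝ≥0∞) : B → ℝ≥0∞ :=
  fun b => ∑' a : A, μ a * η a b

section Aux

lemma mass_eq_indicator {A : Type*} (μ : A → ℝ≥0∞) (X : Set A) :
    mass μ X = ∑' a, X.indicator μ a := tsum_subtype X μ

lemma mass_mono {A : Type*} (μ : A → ℝ≥0∞) {X Y : Set A} (h : X ⊆ Y) :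
    mass μ X ≤ mass μ Y := by
  rw [mass_eq_indicator, mass_eq_indicator]
  exact ENNReal.tsum_le_tsum fun a =>
    Set.indicator_le_indicator_of_subset h (fun _ => zero_le) a

lemma mass_le_tsum {A : Type*} (μ : A → ℝ≥0∞) (X : Set A) :
    mass μ X ≤ ∑' a, μ a := by
  refine (mass_mono μ (Set.subset_univ X)).trans ?_
  rw [show mass μ Set.univ = ∑' a : (Set.univ : Set A), μ a from rfl, tsum_univ]

open MeasureTheory in
/-- Layer cake formula for weighted counting sums of functions bounded by 1. -/
lemma mass_layercake {A : Type*} (μ φ : A → ℝ≥0∞) (hφ : ∀ a, φ a ≤ 1) :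
    ∑' a, μ a * φ a
      = ∫⁻ t in Set.Ioc (0:ℝ) 1, mass μ {a | ENNReal.ofReal t < φ a} := by
  letI : MeasurableSpace A := ⊤
  haveI : MeasurableSingletonClass A := ⟨fun _ => trivial⟩
  set ν : Measure A := (Measure.count (α := A)).withDensity μ with hνdef
  have hφtop : ∀ a, φ a ≠ ⊤ := fun a => ne_top_of_le_ne_top ENNReal.one_ne_top (hφ a)
  have hν : ∀ X : Set A, ν X = mass μ X := by
    intro X
    rw [hνdef, withDensity_apply _ (MeasurableSpace.measurableSet_top)]
    rw [← lintegral_indicator (MeasurableSpace.measurableSet_top) μ, lintegral_count,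
      mass_eq_indicator]
  have lhs : ∑' a, μ a * φ a = ∫⁻ a, φ a ∂ν := by
    rw [hνdef, lintegral_withDensity_eq_lintegral_mul _ measurable_from_top measurable_from_top,
      lintegral_count]
    rfl
  have lc := lintegral_eq_lintegral_meas_lt ν (f := fun a => (φ a).toReal)
      (Filter.Eventually.of_forall fun a => ENNReal.toReal_nonneg)
      measurable_from_top.aemeasurable
  have hofReal : ∀ a, ENNReal.ofReal ((φ a).toReal) = φ a :=
    fun a => ENNReal.ofReal_toReal (hφtop a)
  simp only [hofReal] at lc
  rw [lhs, lc]
  have hset : ∀ t ∈ Set.Ioi (0:ℝ),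
      ν {a | t < (φ a).toReal} = mass μ {a | ENNReal.ofReal t < φ a} := by
    intro t ht
    rw [hν]
    congr 1
    ext a
    simp only [Set.mem_setOf_eq]
    rw [ENNReal.ofReal_lt_iff_lt_toReal (le_of_lt ht) (hφtop a)]
  rw [setLIntegral_congr_fun measurableSet_Ioi hset]
  rw [← Set.Ioc_union_Ioi_eq_Ioi (zero_le_one (α := ℝ)),
    lintegral_union measurableSet_Ioi (Set.Ioc_disjoint_Ioi le_rfl)]
  have hzero : ∫⁻ t in Set.Ioi (1:ℝ), mass μ {a | ENNReal.ofReal t < φ a} = 0 := by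
    rw [setLIntegral_congr_fun measurableSet_Ioi
      (fun t (ht : t ∈ Set.Ioi (1:ℝ)) => ?_), lintegral_zero]
    have : {a | ENNReal.ofReal t < φ a} = ∅ := by
      ext a
      simp only [Set.mem_setOf_eq, Set.mem_empty_iff_false, iff_false, not_lt]
      exact (hφ a).trans (ENNReal.one_lt_ofReal.mpr ht).le
    rw [this]
    simp [mass]
  rw [hzero, add_zero]

lemma mass_dbind {A B : Type*} (μ : A → ℝ≥0∞) (η : A → B → ℝ≥0∞) (Y : Set B) :
    mass (dbind μ η) Y = ∑' a, μ a * mass (η a) Y := by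
  unfold mass dbind
  rw [ENNReal.tsum_comm]
  exact tsum_congr fun a => ENNReal.tsum_mul_left

end Aux

theorem starLift_seq_composition {A₁ A₂ B₁ B₂ : Type*}
    (μ₁ : A₁ → ℝ≥0∞) (μ₂ : A₂ → ℝ≥0∞) (h₁ : SubDist μ₁) (h₂ : SubDist μ₂)
    (η₁ : A₁ → B₁ → ℝ≥0∞) (η₂ : A₂ → B₂ → ℝ≥0∞)
    (hη₁ : ∀ a, SubDist (η₁ a)) (hη₂ : ∀ a, SubDist (η₂ a))
    (R : A₁ → A₂ → Prop) (S : B₁ → B₂ → Prop)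
    (ε ε' δ δ' : ℝ) (hε : 0 ≤ ε) (hε' : 0 ≤ ε') (hδ : 0 ≤ δ) (hδ' : 0 ≤ δ')
    (hμ : ∀ X : Set A₁,
      mass μ₁ X ≤ ENNReal.ofReal (Real.exp ε) * mass μ₂ (relImage R X) + ENNReal.ofReal δ)
    (hη : ∀ a₁ a₂, R a₁ a₂ → ∀ Y : Set B₁,
      mass (η₁ a₁) Y ≤ ENNReal.ofReal (Real.exp ε') * mass (η₂ a₂) (relImage S Y)
        + ENNReal.ofReal δ') :
    ∀ Y : Set B₁,
      mass (dbind μ₁ η₁) Y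
        ≤ ENNReal.ofReal (Real.exp (ε + ε')) * mass (dbind μ₂ η₂) (relImage S Y)
          + (ENNReal.ofReal δ + ENNReal.ofReal δ') := by
  intro Y
  set c : ℝ≥0∞ := ENNReal.ofReal (Real.exp ε) with hc
  set c' : ℝ≥0∞ := ENNReal.ofReal (Real.exp ε') with hc'
  set h : A₂ → ℝ≥0∞ := fun a₂ => mass (η₂ a₂) (relImage S Y) with hh
  set k : A₁ → ℝ≥0∞ := fun a => min (⨅ x : {a₂ // R a a₂}, c' * h x.1) 1 with hk
  set m : A₂ → ℝ≥0∞ := fun a₂ => min (c' * h a₂) 1 with hm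
  have hk1 : ∀ a, k a ≤ 1 := fun a => min_le_right _ _
  have hm1 : ∀ a, m a ≤ 1 := fun a => min_le_right _ _
  have hf1 : ∀ a, mass (η₁ a) Y ≤ 1 := fun a => (mass_le_tsum _ _).trans (by
    have := hη₁ a
    unfold SubDist at this
    rwa [show mass (η₁ a) Set.univ = ∑' b : (Set.univ : Set B₁), η₁ a b from rfl,
      tsum_univ] at this)
  have hμ1 : (∑' a, μ₁ a) ≤ 1 := by
    have := h₁
    unfold SubDist at this
    rwa [show mass μ₁ Set.univ = ∑' a : (Set.univ : Set A₁), μ₁ a from rfl, tsum_univ] at this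
  -- step 2: pointwise bound
  have step2 : ∀ a, mass (η₁ a) Y ≤ k a + ENNReal.ofReal δ' := by
    intro a
    have hdef : k a = min (⨅ x : {a₂ // R a a₂}, c' * h x.1) 1 := rfl
    rw [hdef]
    rcases min_cases (⨅ x : {a₂ // R a a₂}, c' * h x.1) 1 with ⟨heq, hle⟩ | ⟨heq, hle⟩ <;>
      rw [heq]
    · -- min = iInf
      rw [← tsub_le_iff_right]
      refine le_iInf fun x => ?_
      rw [tsub_le_iff_right]
      exact hη a x.1 x.2 Y
    · exact (hf1 a).trans (le_add_right le_rfl)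
  -- step 3
  have step3 : mass (dbind μ₁ η₁) Y ≤ (∑' a, μ₁ a * k a) + ENNReal.ofReal δ' := by
    rw [mass_dbind]
    calc ∑' a, μ₁ a * mass (η₁ a) Y
        ≤ ∑' a, μ₁ a * (k a + ENNReal.ofReal δ') :=
          ENNReal.tsum_le_tsum fun a => mul_le_mul_right (step2 a) _
      _ = (∑' a, μ₁ a * k a) + (∑' a, μ₁ a) * ENNReal.ofReal δ' := by
          simp_rw [mul_add, ENNReal.tsum_add, ENNReal.tsum_mul_right]
      _ ≤ (∑' a, μ₁ a * k a) + 1 * ENNReal.ofReal δ' := by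
          gcongr
      _ = (∑' a, μ₁ a * k a) + ENNReal.ofReal δ' := by rw [one_mul]
  -- step: relate via layer cake
  have step4 : (∑' a, μ₁ a * k a)
      ≤ c * (∑' a₂, μ₂ a₂ * m a₂) + ENNReal.ofReal δ := by
    rw [mass_layercake μ₁ k hk1, mass_layercake μ₂ m hm1]
    have hmono : ∀ t ∈ Set.Ioc (0:ℝ) 1,
        mass μ₁ {a | ENNReal.ofReal t < k a}
          ≤ c * mass μ₂ {a₂ | ENNReal.ofReal t < m a₂} + ENNReal.ofReal δ := by
      intro t _
      refine (hμ {a | ENNReal.ofReal t < k a}).trans ?_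
      gcongr
      refine mass_mono μ₂ ?_
      rintro a₂ ⟨a₁, ha₁, hR⟩
      have ha₁' : ENNReal.ofReal t < min (⨅ x : {a₂ // R a₁ a₂}, c' * h x.1) 1 := ha₁
      have h2 : ENNReal.ofReal t < 1 := ha₁'.trans_le (min_le_right _ _)
      have h1 : ENNReal.ofReal t < c' * h a₂ :=
        lt_of_lt_of_le (ha₁'.trans_le (min_le_left _ _))
          (iInf_le (fun x : {a₂ // R a₁ a₂} => c' * h x.1) ⟨a₂, hR⟩)
      show ENNReal.ofReal t < min (c' * h a₂) 1
      exact lt_min h1 h2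
    calc ∫⁻ t in Set.Ioc (0:ℝ) 1, mass μ₁ {a | ENNReal.ofReal t < k a}
        ≤ ∫⁻ t in Set.Ioc (0:ℝ) 1,
            (c * mass μ₂ {a₂ | ENNReal.ofReal t < m a₂} + ENNReal.ofReal δ) := by
          exact MeasureTheory.setLIntegral_mono' measurableSet_Ioc hmono
      _ = c * (∫⁻ t in Set.Ioc (0:ℝ) 1, mass μ₂ {a₂ | ENNReal.ofReal t < m a₂})
            + ENNReal.ofReal δ := by
          rw [MeasureTheory.lintegral_add_right _ measurable_const,
            MeasureTheory.lintegral_const_mul' _ _ ENNReal.ofReal_ne_top,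
            MeasureTheory.setLIntegral_const, Real.volume_Ioc]
          norm_num
          rfl
  -- step: m ≤ c' * h
  have step5 : (∑' a₂, μ₂ a₂ * m a₂) ≤ c' * ∑' a₂, μ₂ a₂ * h a₂ := by
    rw [← ENNReal.tsum_mul_left]
    refine ENNReal.tsum_le_tsum fun a₂ => ?_
    rw [← mul_assoc, mul_comm c' (μ₂ a₂), mul_assoc]
    exact mul_le_mul_right (min_le_left _ _) _
  have hfin : mass (dbind μ₂ η₂) (relImage S Y) = ∑' a₂, μ₂ a₂ * h a₂ := mass_dbind _ _ _
  calc mass (dbind μ₁ η₁) Y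
      ≤ (∑' a, μ₁ a * k a) + ENNReal.ofReal δ' := step3
    _ ≤ (c * (∑' a₂, μ₂ a₂ * m a₂) + ENNReal.ofReal δ) + ENNReal.ofReal δ' := by gcongr
    _ ≤ (c * (c' * ∑' a₂, μ₂ a₂ * h a₂) + ENNReal.ofReal δ) + ENNReal.ofReal δ' := by gcongr
    _ = ENNReal.ofReal (Real.exp (ε + ε')) * mass (dbind μ₂ η₂) (relImage S Y)
          + (ENNReal.ofReal δ + ENNReal.ofReal δ') := by
        rw [hfin, ← mul_assoc, hc, hc', ← ENNReal.ofReal_mul (Real.exp_pos ε).le,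
          ← Real.exp_add, add_assoc]
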